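/- Let σ be an integral cone in a lattice L and suppose the real dual cone C = {v : L →+ ℝ additive homomorphism | v(a) ≥ 0 for all a ∈ σ} spans the whole real vector space of additive homomorphisms L → ℝ (i.e. C is full-dimensional). Then for every a ∈ L, the set σ ∩ (a − σ) = {b ∈ σ : a − b ∈ σ} is finite. In particular, each element of σ has only finitely many decompositions a = b + c with b, c ∈ σ up to the order of summands. -/

import Mathlib

/-- An integral cone in `L`: a subset containing `0` and closed under addition. -/
def IsCone {L : Type*} [AddCommMonoid L] (σ : Set L) : Prop :=
  0 ∈ σ ∧ ∀ a ∈ σ, ∀ b ∈ σ, a + b ∈ σ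

/-- if the real dual cone of an integral cone `σ` spans the
whole space of additive homomorphisms `L → ℝ`, then for every `a ∈ L` the set
`σ ∩ (a − σ)` is finite; in particular every element has only finitely many
decompositions as a sum of two elements of `σ`. -/
theorem stmt19
    {L : Type*} [AddCommGroup L] [Module.Free ℤ L] [Module.Finite ℤ L]
    (σ : Set L) (hσ : IsCone σ)
    (hfull : Submodule.span ℝ {v : L →+ ℝ | ∀ a ∈ σ, 0 ≤ v a} = ⊤) :
    ∀ a : L,
      {b ∈ σ | a - b ∈ σ}.Finite ∧
      {p : L × L | p.1 ∈ σ ∧ p.2 ∈ σ ∧ p.1 + p.2 = a}.Finite := by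
  intro a
  set C : Set (L →+ ℝ) := {v : L →+ ℝ | ∀ a ∈ σ, 0 ≤ v a} with hC
  set S : Set L := {b ∈ σ | a - b ∈ σ} with hSdef
  have key : S.Finite := by
    rcases S.eq_empty_or_nonempty with h | ⟨b0, hb0⟩
    · rw [h]; exact Set.finite_empty
    · have ha : a ∈ σ := by
        have := hσ.2 b0 hb0.1 (a - b0) hb0.2
        simpa using this
      -- every dual vector is bounded on S by its value at a
      have hbound : ∀ v ∈ C, ∀ b ∈ S, 0 ≤ v b ∧ v b ≤ v a := by
        intro v hv b hb
        refine ⟨hv b hb.1, ?_⟩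
        have h1 : 0 ≤ v (a - b) := hv _ hb.2
        rw [map_sub] at h1
        linarith
      -- coordinates w.r.t. a chosen basis
      set ι := Module.Free.ChooseBasisIndex ℤ L
      set B : Module.Basis ι ℤ L := Module.Free.chooseBasis ℤ L with hB
      -- each real-valued coordinate functional is bounded on S
      have hcoord : ∀ j : ι, ∃ M : ℝ, ∀ b ∈ S, |((B.repr b j : ℤ) : ℝ)| ≤ M := by
        intro j
        set f : L →+ ℝ := (Int.castAddHom ℝ).comp (B.coord j).toAddMonoidHom with hf
        have hfmem : f ∈ Submodule.span ℝ C := by rw [hfull]; trivial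
        obtain ⟨n, c, v, hsum⟩ := Submodule.mem_span_set'.mp hfmem
        refine ⟨∑ i, |c i| * (v i : L →+ ℝ) a, ?_⟩
        intro b hb
        have hfb : ((B.repr b j : ℤ) : ℝ) = f b := by
          simp [hf, Module.Basis.coord_apply]
        rw [hfb, ← hsum]
        have happ : (∑ i, c i • (v i : L →+ ℝ)) b = ∑ i, c i * (v i : L →+ ℝ) b := by
          rw [AddMonoidHom.finset_sum_apply]
          simp
        rw [happ]
        refine (Finset.abs_sum_le_sum_abs _ _).trans ?_
        apply Finset.sum_le_sum
        intro i _
        rw [abs_mul]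
        obtain ⟨h0, h1⟩ := hbound (v i) (v i).2 b hb
        have hva : 0 ≤ (v i : L →+ ℝ) a := (v i).2 a ha
        have : |(v i : L →+ ℝ) b| ≤ (v i : L →+ ℝ) a := by
          rw [abs_of_nonneg h0]; exact h1
        exact mul_le_mul_of_nonneg_left this (abs_nonneg _) |>.trans
          (le_of_eq rfl)
      choose M hM using hcoord
      -- the coordinate map is injective and lands in a finite box
      have hinj : Set.InjOn (fun b : L => fun j : ι => B.repr b j) S := by
        intro x _ y _ hxy
        have : B.repr x = B.repr y := by
          ext j
          exact congrFun hxy j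
        exact B.repr.injective this
      have himg : (fun b : L => fun j : ι => B.repr b j) '' S ⊆
          ↑(Fintype.piFinset fun j : ι => Finset.Icc (⌈-(M j)⌉) (⌊M j⌋)) := by
        rintro _ ⟨b, hb, rfl⟩
        simp only [Finset.mem_coe, Fintype.mem_piFinset,
          Finset.mem_Icc]
        intro j
        have := hM j b hb
        rw [abs_le] at this
        constructor
        · exact Int.ceil_le.mpr (by exact_mod_cast this.1)
        · exact Int.le_floor.mpr (by exact_mod_cast this.2)
      exact Set.Finite.of_finite_image
        ((Set.Finite.subset (Finset.finite_toSet _) himg)) hinj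
  refine ⟨key, ?_⟩
  have hsub : {p : L × L | p.1 ∈ σ ∧ p.2 ∈ σ ∧ p.1 + p.2 = a} ⊆
      (fun b => (b, a - b)) '' S := by
    rintro ⟨x, y⟩ ⟨hx, hy, hxy⟩
    refine ⟨x, ⟨hx, ?_⟩, ?_⟩
    · have : a - x = y := by rw [← hxy]; abel
      rw [this]; exact hy
    · have : a - x = y := by rw [← hxy]; abel
      simp [this]
  exact (key.image _).subset hsub
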